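/- Let χ be a nonzero complex number and let I be the ideal of ℂ[z₁,z₂] generated by z₁²(z₂−1) and (χz₁+1)²z₂³. Then I equals the ideal of ℂ[z₁,z₂] generated by the four polynomials z₁²z₂ − z₁², −2χ³z₁³ − 3χ²z₁² + z₂³, z₂⁴ − z₂³, and 2χz₁z₂³ + χ²z₁² + z₂³. -/
import Mathlib


open MvPolynomial

lemma mem_span4 {R : Type*} [CommRing R] {a b c d x : R}
    (p q r s : R) (h : x = p * a + q * b + r * c + s * d) :
    x ∈ Ideal.span ({a, b, c, d} : Set R) := by
  subst h
  have ha : a ∈ Ideal.span ({a, b, c, d} : Set R) := Ideal.subset_span (by simp)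
  have hb : b ∈ Ideal.span ({a, b, c, d} : Set R) := Ideal.subset_span (by simp)
  have hc : c ∈ Ideal.span ({a, b, c, d} : Set R) := Ideal.subset_span (by simp)
  have hd : d ∈ Ideal.span ({a, b, c, d} : Set R) := Ideal.subset_span (by simp)
  exact add_mem (add_mem (add_mem (Ideal.mul_mem_left _ _ ha) (Ideal.mul_mem_left _ _ hb))
    (Ideal.mul_mem_left _ _ hc)) (Ideal.mul_mem_left _ _ hd)

/-- The ideal of `ℂ[z₁,z₂]` generated by `z₁²(z₂−1)` and `(χz₁+1)²z₂³` (with `χ ≠ 0`)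
equals the ideal generated by the four Gröbner-basis polynomials
`z₁²z₂ − z₁²`, `−2χ³z₁³ − 3χ²z₁² + z₂³`, `z₂⁴ − z₂³`, `2χz₁z₂³ + χ²z₁² + z₂³`. -/
theorem ideal_eq_groebner_ideal (χ : ℂ) (hχ : χ ≠ 0) :
    Ideal.span ({(X 0) ^ 2 * (X 1 - 1),
        (C χ * X 0 + 1) ^ 2 * (X 1) ^ 3} : Set (MvPolynomial (Fin 2) ℂ)) =
    Ideal.span ({(X 0) ^ 2 * X 1 - (X 0) ^ 2,
        - C (2 * χ ^ 3) * (X 0) ^ 3 - C (3 * χ ^ 2) * (X 0) ^ 2 + (X 1) ^ 3,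
        (X 1) ^ 4 - (X 1) ^ 3,
        C (2 * χ) * X 0 * (X 1) ^ 3 + C (χ ^ 2) * (X 0) ^ 2 + (X 1) ^ 3} :
      Set (MvPolynomial (Fin 2) ℂ)) := by
  apply le_antisymm <;> rw [Ideal.span_le] <;> intro f hf <;>
    simp only [Set.mem_insert_iff, Set.mem_singleton_iff] at hf
  · rcases hf with h | h <;> subst h
    · exact mem_span4 1 0 0 0 (by
        simp only [map_mul, map_pow, map_ofNat]; ring)
    · exact mem_span4 (C (χ ^ 2) * ((X 1) ^ 2 + X 1 + 1)) 0 0 1 (by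
        simp only [map_mul, map_pow, map_ofNat]; ring)
  · rcases hf with h | h | h | h <;> subst h <;> rw [SetLike.mem_coe, Ideal.mem_span_pair]
    · exact ⟨1, 0, by ring⟩
    · exact ⟨(C (2 * χ ^ 3) * X 0 + C (3 * χ ^ 2)) * ((X 1) ^ 2 + X 1 + 1),
        1 - C (2 * χ) * X 0, by simp only [map_mul, map_pow, map_ofNat]; ring⟩
    · exact ⟨(C (2 * χ ^ 3) * X 0 + C (3 * χ ^ 2)) * (X 1) ^ 3,
        (1 - C (2 * χ) * X 0) * (X 1 - 1), by simp only [map_mul, map_pow, map_ofNat]; ring⟩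
    · exact ⟨- C (χ ^ 2) * ((X 1) ^ 2 + X 1 + 1), 1,
        by simp only [map_mul, map_pow, map_ofNat]; ring⟩
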